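/- Let λ, μ > 0 with ρ = λ/μ < 1, and let i ≥ 0 be an integer. Then the function t ↦ p_{i0}(t) defined by the explicit integral formula is differentiable on (0, ∞) and satisfies the boundary Kolmogorov forward equation d/dt p_{i0}(t) = μ·p_{i1}(t) − λ·p_{i0}(t) for all t > 0, where p_{ij}(t) = (2/π)·ρ^{(j−i)/2}·∫₀^π e^{−μ t γ(y)}/γ(y) · a_i(y)·a_j(y) dy + (1−ρ)·ρ^j. -/

import Mathlib

open Real MeasureTheory Set Filter

/-- γ(y) = 1 + ρ − 2√ρ·cos(y). -/
noncomputable def gam (ρ y : ℝ) : ℝ := 1 + ρ - 2 * Real.sqrt ρ * Real.cos y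

/-- a_k(y) = sin(k·y) − √ρ·sin((k+1)·y). -/
noncomputable def aco (ρ : ℝ) (k : ℕ) (y : ℝ) : ℝ :=
  Real.sin ((k : ℝ) * y) - Real.sqrt ρ * Real.sin (((k : ℝ) + 1) * y)

/-- Transient expected queue length of an M/M/1 queue started with `i` customers. -/
noncomputable def EL (lam mu : ℝ) (i : ℕ) (t : ℝ) : ℝ :=
  (2 / Real.pi) * (lam / mu) ^ ((1 - (i : ℝ)) / 2) *
    (∫ y in (0 : ℝ)..Real.pi,
      Real.exp (-(mu * t * gam (lam / mu) y)) / (gam (lam / mu) y) ^ 2 *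
        (aco (lam / mu) i y * Real.sin y)) +
  (lam / mu) / (1 - lam / mu)

/-- Transient probability that an M/M/1 queue started with `i` customers has `j` at time `t`. -/
noncomputable def pq (lam mu : ℝ) (i j : ℕ) (t : ℝ) : ℝ :=
  (2 / Real.pi) * (lam / mu) ^ (((j : ℝ) - (i : ℝ)) / 2) *
    (∫ y in (0 : ℝ)..Real.pi,
      Real.exp (-(mu * t * gam (lam / mu) y)) / gam (lam / mu) y *
        (aco (lam / mu) i y * aco (lam / mu) j y)) +
  (1 - lam / mu) * (lam / mu) ^ j

/-- Erlang(n) density with rate `mu`: f_n(t) = μⁿ t^{n−1} e^{−μt}/(n−1)!. -/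
noncomputable def erl (mu : ℝ) (n : ℕ) (t : ℝ) : ℝ :=
  mu ^ n * t ^ (n - 1) * Real.exp (-(mu * t)) / (Nat.factorial (n - 1) : ℝ)

/-- Expected total time to complete queue with `a` customers first, then queue with `b`. -/
noncomputable def ETT (lam mu : ℝ) (a b : ℕ) : ℝ :=
  ((a : ℝ) + 2) / mu + (1 / mu) * ∫ t in Set.Ioi (0 : ℝ), erl mu (a + 1) t * EL lam mu b t

lemma gam_cont (ρ : ℝ) : Continuous (gam ρ) := by unfold gam; continuity

lemma aco_cont (ρ : ℝ) (k : ℕ) : Continuous (aco ρ k) := by unfold aco; continuity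

lemma gam_pos {ρ : ℝ} (h0 : 0 ≤ ρ) (h1 : ρ < 1) (y : ℝ) : 0 < gam ρ y := by
  have hs := Real.sq_sqrt h0
  have hsnn := Real.sqrt_nonneg ρ
  have hslt : Real.sqrt ρ < 1 := by
    rw [show (1:ℝ) = Real.sqrt 1 by simp]
    exact Real.sqrt_lt_sqrt h0 h1
  have hc := Real.cos_le_one y
  unfold gam
  nlinarith [mul_nonneg hsnn (sub_nonneg.mpr hc), mul_pos (sub_pos.mpr hslt) (sub_pos.mpr hslt)]

lemma aco_abs_le {ρ : ℝ} (h0 : 0 ≤ ρ) (h1 : ρ < 1) (k : ℕ) (y : ℝ) : |aco ρ k y| ≤ 2 := by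
  have hsnn := Real.sqrt_nonneg ρ
  have hslt : Real.sqrt ρ < 1 := by
    rw [show (1:ℝ) = Real.sqrt 1 by simp]
    exact Real.sqrt_lt_sqrt h0 h1
  unfold aco
  have h2 := Real.abs_sin_le_one ((k : ℝ) * y)
  have h3 := Real.abs_sin_le_one (((k : ℝ) + 1) * y)
  have := abs_sub (Real.sin ((k : ℝ) * y)) (Real.sqrt ρ * Real.sin (((k : ℝ) + 1) * y))
  rw [abs_mul, abs_of_nonneg hsnn] at this
  nlinarith

/-- Boundary Kolmogorov forward equation: d/dt p_{i0}(t) = μ·p_{i1}(t) − λ·p_{i0}(t) on (0,∞). -/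
theorem pq_kolmogorov_forward_boundary (lam mu : ℝ) (hlam : 0 < lam) (hmu : 0 < mu)
    (hρ : lam / mu < 1) (i : ℕ) :
    ∀ t : ℝ, 0 < t →
      HasDerivAt (fun s : ℝ => pq lam mu i 0 s)
        (mu * pq lam mu i 1 t - lam * pq lam mu i 0 t) t := by
  intro t ht
  set ρ : ℝ := lam / mu with hρdef
  clear_value ρ
  have hρpos : 0 < ρ := hρdef ▸ div_pos hlam hmu
  have h0 : (0:ℝ) ≤ ρ := hρpos.le
  have hgpos := gam_pos h0 hρ
  have hgne : ∀ y, gam ρ y ≠ 0 := fun y => (hgpos y).ne'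
  have hs := Real.sq_sqrt h0
  have hsnn := Real.sqrt_nonneg ρ
  have hlam_eq : lam = mu * ρ := by rw [hρdef]; field_simp
  -- the parametric integrand and its t-derivative
  set F : ℝ → ℝ → ℝ := fun x y =>
    Real.exp (-(mu * x * gam ρ y)) / gam ρ y * (aco ρ i y * aco ρ 0 y) with hF
  set F' : ℝ → ℝ → ℝ := fun x y =>
    -mu * Real.exp (-(mu * x * gam ρ y)) * (aco ρ i y * aco ρ 0 y) with hF'
  have hFcont : ∀ x, Continuous (F x) := fun x =>
    ((Real.continuous_exp.comp (continuous_const.mul (gam_cont ρ)).neg).div (gam_cont ρ) hgne).mul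
      ((aco_cont ρ i).mul (aco_cont ρ 0))
  have hF'cont : ∀ x, Continuous (F' x) := fun x =>
    ((continuous_const.mul
        (Real.continuous_exp.comp (continuous_const.mul (gam_cont ρ)).neg)).mul
      ((aco_cont ρ i).mul (aco_cont ρ 0)))
  have hderiv : ∀ y, ∀ x : ℝ, HasDerivAt (fun s => F s y) (F' x y) x := by
    intro y x
    have h1 : HasDerivAt (fun s : ℝ => -(mu * s * gam ρ y)) (-(mu * gam ρ y)) x := by
      have heq : (fun s : ℝ => -(mu * s * gam ρ y)) = fun s => -(mu * gam ρ y) * s := by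
        funext s; ring
      rw [heq]
      simpa using (hasDerivAt_id x).const_mul (-(mu * gam ρ y))
    have h3 := ((h1.exp).div_const (gam ρ y)).mul_const (aco ρ i y * aco ρ 0 y)
    have hval : Real.exp (-(mu * x * gam ρ y)) * -(mu * gam ρ y) / gam ρ y *
        (aco ρ i y * aco ρ 0 y) = F' x y := by
      rw [hF']
      field_simp [hgne y]
    exact hval ▸ h3
  -- differentiation under the integral sign
  have key : HasDerivAt (fun x => ∫ y in (0:ℝ)..Real.pi, F x y)
      (∫ y in (0:ℝ)..Real.pi, F' t y) t := by
    have hb : ∀ᵐ y ∂(volume : Measure ℝ), y ∈ Set.uIoc (0:ℝ) Real.pi →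
        ∀ x ∈ Metric.ball t (t / 2), ‖F' x y‖ ≤ 4 * mu := by
      refine Eventually.of_forall fun y _ x hx => ?_
      have hxpos : 0 < x := by
        have h4 := abs_lt.mp ((Real.dist_eq x t) ▸ Metric.mem_ball.mp hx)
        linarith [h4.1]
      have hexp : Real.exp (-(mu * x * gam ρ y)) ≤ 1 := by
        apply Real.exp_le_one_iff.mpr
        have := mul_pos (mul_pos hmu hxpos) (hgpos y)
        linarith
      have hexp0 : 0 ≤ Real.exp (-(mu * x * gam ρ y)) := (Real.exp_pos _).le
      have hai := aco_abs_le h0 hρ i y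
      have ha0 := aco_abs_le h0 hρ 0 y
      have hai0 := abs_nonneg (aco ρ i y)
      have ha00 := abs_nonneg (aco ρ 0 y)
      simp only [hF', Real.norm_eq_abs, abs_mul, abs_neg, abs_of_pos hmu,
        abs_of_nonneg hexp0]
      calc mu * Real.exp (-(mu * x * gam ρ y)) * (|aco ρ i y| * |aco ρ 0 y|)
          ≤ mu * 1 * (2 * 2) := by
            apply mul_le_mul (mul_le_mul le_rfl hexp hexp0 hmu.le)
              (mul_le_mul hai ha0 ha00 (by norm_num)) (by positivity) (by positivity)
        _ = 4 * mu := by ring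
    exact (intervalIntegral.hasDerivAt_integral_of_dominated_loc_of_deriv_le
      (F := F) (F' := F') (x₀ := t) (bound := fun _ => 4 * mu) (a := 0) (b := Real.pi)
      (μ := volume) (Metric.ball_mem_nhds t (half_pos ht))
      (Eventually.of_forall fun x => (hFcont x).aestronglyMeasurable)
      ((hFcont t).intervalIntegrable 0 Real.pi)
      (hF'cont t).aestronglyMeasurable hb
      intervalIntegrable_const
      (Eventually.of_forall fun y _ x _ => hderiv y x)).2
  -- the full function: constant * integral + constant
  have hpq : (fun s : ℝ => pq lam mu i 0 s)
      = fun s => (2 / Real.pi) * ρ ^ ((((0:ℕ):ℝ) - (i:ℝ)) / 2) *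
          (∫ y in (0:ℝ)..Real.pi, F s y) + (1 - ρ) * ρ ^ (0:ℕ) := by
    funext s
    simp only [pq, ← hρdef, hF]
  have hC : HasDerivAt (fun s : ℝ => pq lam mu i 0 s)
      ((2 / Real.pi) * ρ ^ ((((0:ℕ):ℝ) - (i:ℝ)) / 2) * ∫ y in (0:ℝ)..Real.pi, F' t y) t := by
    rw [hpq]
    exact (key.const_mul _).add_const _
  convert hC using 1
  -- the integrals
  set I1 : ℝ := ∫ y in (0:ℝ)..Real.pi,
    Real.exp (-(mu * t * gam ρ y)) / gam ρ y * (aco ρ i y * aco ρ 1 y) with hI1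
  set I0 : ℝ := ∫ y in (0:ℝ)..Real.pi, F t y with hI0
  have hint1 : IntervalIntegrable (fun y =>
      Real.exp (-(mu * t * gam ρ y)) / gam ρ y * (aco ρ i y * aco ρ 1 y)) volume 0 Real.pi :=
    (((Real.continuous_exp.comp (continuous_const.mul (gam_cont ρ)).neg).div (gam_cont ρ)
      hgne).mul ((aco_cont ρ i).mul (aco_cont ρ 1))).intervalIntegrable 0 Real.pi
  have hint0 : IntervalIntegrable (F t) volume 0 Real.pi :=
    (hFcont t).intervalIntegrable 0 Real.pi
  -- integral identity
  have hII : mu * Real.sqrt ρ * I1 - lam * I0 = ∫ y in (0:ℝ)..Real.pi, F' t y := by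
    rw [hI1, hI0, ← intervalIntegral.integral_const_mul, ← intervalIntegral.integral_const_mul,
      ← intervalIntegral.integral_sub (hint1.const_mul _) (hint0.const_mul _)]
    apply intervalIntegral.integral_congr
    intro y _
    have hgy := hgne y
    simp only [hF, hF']
    simp only [aco, Nat.cast_zero, Nat.cast_one, zero_mul, Real.sin_zero, zero_add, one_mul,
      zero_sub]
    have h2y : Real.sin (((1:ℝ) + 1) * y) = 2 * Real.sin y * Real.cos y := by
      rw [show ((1:ℝ)+1) * y = 2 * y by ring, Real.sin_two_mul]
    rw [h2y, hlam_eq]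
    unfold gam at hgy ⊢
    field_simp [hgy]
    have hgy' : 1 + ρ - √ρ * 2 * cos y ≠ 0 := by convert hgy using 1; ring
    rw [show (1 - √ρ * 2 * cos y - -ρ) = 1 + ρ - √ρ * 2 * cos y by ring, mul_div_assoc,
      div_self hgy', mul_one]
  -- rpow manipulation
  have hrpow : ρ ^ ((((1:ℕ):ℝ) - (i:ℝ)) / 2)
      = Real.sqrt ρ * ρ ^ ((((0:ℕ):ℝ) - (i:ℝ)) / 2) := by
    rw [show ((((1:ℕ):ℝ) - (i:ℝ)) / 2)
        = 1/2 + ((((0:ℕ):ℝ) - (i:ℝ)) / 2) by push_cast; ring,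
      Real.rpow_add hρpos, Real.sqrt_eq_rpow]
  simp only [pq, ← hρdef, pow_zero, pow_one, mul_one]
  rw [hrpow, ← hII]
  simp only [hI1, hI0, hF]
  rw [hlam_eq]
  ring
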